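/- arXiv:2502.08585 — 2 statements merged into one kernel-verified Lean document; each statement's English description precedes it below -/
import Mathlib

section
/- Let f, g : ℝ^p × ℝ^d → ℝ be differentiable and λ > 0, and suppose Φ := f + λ·g is differentiable with L_Φ-Lipschitz gradient (L_Φ > 0) and bounded below by Φ* ∈ ℝ. Let 0 < α ≤ 1/L_Φ, and define iterates θ^{t+1} = θ^t − α·∇Φ(θ^t) with θ^t = (W^t, x^t). Suppose for every t there exists x_t^* ∈ ℝ^d that is a global minimizer of x ↦ g(W^t, x) (so ∇_x g(W^t, x_t^*) = 0), and that ‖∇_W g(W^t, x_t^*)‖² ≤ ε̄ for some ε̄ ≥ 0. Then for every T ≥ 1, (1/T)·Σ_{t=0}^{T−1} ‖∇f(θ^t) + λ·(∇g(θ^t) − ∇g(W^t, x_t^*))‖² ≤ 4·(Φ(θ^0) − Φ*)/(α·T) + 2·λ²·ε̄. -/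
open scoped RealInnerProductSpace

set_option linter.unusedSectionVars false
set_option linter.unusedVariables false
set_option maxHeartbeats 1000000

/-- The point `(W, x)` of the product Hilbert space `ℝ^p × ℝ^d` (with the ℓ² product
norm `‖(u,v)‖² = ‖u‖² + ‖v‖²`). -/
noncomputable def pairL2 {E F : Type*} [NormedAddCommGroup E] [NormedAddCommGroup F]
    (a : E) (b : F) : WithLp 2 (E × F) := (WithLp.equiv 2 (E × F)).symm (a, b)


section Descent
variable {H : Type*} [NormedAddCommGroup H] [InnerProductSpace ℝ H] [CompleteSpace H]

lemma fderiv_eq_inner_gradient (f : H → ℝ) (x u : H) :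
    fderiv ℝ f x u = ⟪gradient f x, u⟫ := by
  show fderiv ℝ f x u = ⟪(InnerProductSpace.toDual ℝ H).symm (fderiv ℝ f x), u⟫
  rw [InnerProductSpace.toDual_symm_apply]

lemma descent_lemma (Φ : H → ℝ) (hΦ : Differentiable ℝ Φ) (L : ℝ) (hL : 0 ≤ L)
    (hLip : ∀ a b, ‖gradient Φ a - gradient Φ b‖ ≤ L * ‖a - b‖) (x y : H) :
    Φ y ≤ Φ x + ⟪gradient Φ x, y - x⟫ + L / 2 * ‖y - x‖ ^ 2 := by
  set v := y - x with hv
  have hgradLip : LipschitzWith (Real.toNNReal L) (gradient Φ) := by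
    apply LipschitzWith.of_dist_le_mul
    intro a b
    rw [dist_eq_norm, dist_eq_norm, Real.coe_toNNReal L hL]
    exact hLip a b
  have hcont : Continuous fun t : ℝ => ⟪gradient Φ (x + t • v), v⟫ := by
    exact (hgradLip.continuous.comp (by continuity)).inner continuous_const
  have hderiv : ∀ t : ℝ, HasDerivAt (fun s : ℝ => Φ (x + s • v))
      (⟪gradient Φ (x + t • v), v⟫) t := by
    intro t
    have h1 : HasDerivAt (fun s : ℝ => x + s • v) v t := by
      simpa using ((hasDerivAt_id t).smul_const v).const_add x
    have h2 := ((hΦ (x + t • v)).hasFDerivAt).comp_hasDerivAt t h1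
    rw [fderiv_eq_inner_gradient Φ (x + t • v) v] at h2
    exact h2
  have key : Φ y - Φ x = ∫ t in (0:ℝ)..1, ⟪gradient Φ (x + t • v), v⟫ := by
    have h := intervalIntegral.integral_eq_sub_of_hasDerivAt
      (f := fun s : ℝ => Φ (x + s • v)) (fun t _ => hderiv t)
      (hcont.intervalIntegrable 0 1)
    simpa [hv] using h.symm
  have hmono : (∫ t in (0:ℝ)..1, ⟪gradient Φ (x + t • v), v⟫)
      ≤ ∫ t in (0:ℝ)..1, (⟪gradient Φ x, v⟫ + L * t * ‖v‖ ^ 2) := by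
    apply intervalIntegral.integral_mono_on (by norm_num)
      (hcont.intervalIntegrable 0 1)
      (by apply Continuous.intervalIntegrable; continuity)
    intro t ht
    rcases ht with ⟨ht0, _ht1⟩
    have h1 : ⟪gradient Φ (x + t • v) - gradient Φ x, v⟫ ≤ L * t * ‖v‖ ^ 2 := by
      calc ⟪gradient Φ (x + t • v) - gradient Φ x, v⟫
          ≤ ‖gradient Φ (x + t • v) - gradient Φ x‖ * ‖v‖ := real_inner_le_norm _ _
        _ ≤ (L * ‖(x + t • v) - x‖) * ‖v‖ :=
            mul_le_mul_of_nonneg_right (hLip _ _) (norm_nonneg v)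
        _ = L * t * ‖v‖ ^ 2 := by
            rw [add_sub_cancel_left, norm_smul, Real.norm_eq_abs, abs_of_nonneg ht0]
            ring
    have h2 : ⟪gradient Φ (x + t • v), v⟫ - ⟪gradient Φ x, v⟫
        = ⟪gradient Φ (x + t • v) - gradient Φ x, v⟫ := (inner_sub_left _ _ _).symm
    linarith
  have hint : (∫ t in (0:ℝ)..1, (⟪gradient Φ x, v⟫ + L * t * ‖v‖ ^ 2))
      = ⟪gradient Φ x, v⟫ + L / 2 * ‖v‖ ^ 2 := by
    have : (fun t : ℝ => ⟪gradient Φ x, v⟫ + L * t * ‖v‖ ^ 2)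
        = fun t : ℝ => ⟪gradient Φ x, v⟫ + (L * ‖v‖ ^ 2) * t := by
      funext t; ring
    rw [this, intervalIntegral.integral_add (intervalIntegrable_const)
      ((intervalIntegral.intervalIntegrable_id).const_mul _),
      intervalIntegral.integral_const, intervalIntegral.integral_const_mul,
      integral_id]
    simp; ring
  linarith [key, hmono, hint.le, hint.ge]

lemma gradient_add_smul (f g : H → ℝ) (hf : Differentiable ℝ f) (hg : Differentiable ℝ g)
    (lam : ℝ) (θ : H) :
    gradient (fun θ => f θ + lam * g θ) θ = gradient f θ + lam • gradient g θ := by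
  have h1 : HasFDerivAt (fun θ => f θ + lam * g θ)
      (fderiv ℝ f θ + lam • fderiv ℝ g θ) θ :=
    ((hf θ).hasFDerivAt).add (((hg θ).hasFDerivAt).const_mul lam)
  apply ext_inner_right ℝ
  intro u
  rw [← fderiv_eq_inner_gradient, h1.fderiv, inner_add_left, real_inner_smul_left,
    ← fderiv_eq_inner_gradient, ← fderiv_eq_inner_gradient]
  simp

end Descent

section Partial
variable {E F : Type*} [NormedAddCommGroup E] [InnerProductSpace ℝ E] [CompleteSpace E]
  [NormedAddCommGroup F] [InnerProductSpace ℝ F] [CompleteSpace F]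

noncomputable def J1 : E →L[ℝ] WithLp 2 (E × F) :=
  ((WithLp.prodContinuousLinearEquiv 2 ℝ E F).symm :
    (E × F) →L[ℝ] WithLp 2 (E × F)).comp (ContinuousLinearMap.inl ℝ E F)

noncomputable def J2 : F →L[ℝ] WithLp 2 (E × F) :=
  ((WithLp.prodContinuousLinearEquiv 2 ℝ E F).symm :
    (E × F) →L[ℝ] WithLp 2 (E × F)).comp (ContinuousLinearMap.inr ℝ E F)

lemma pairL2_eq_J1 (w : E) (x : F) : pairL2 w x = J1 w + pairL2 0 x := by
  apply (WithLp.prodContinuousLinearEquiv 2 ℝ E F).injective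
  simp [pairL2, J1]

lemma pairL2_eq_J2 (w : E) (x : F) : pairL2 w x = J2 x + pairL2 w 0 := by
  apply (WithLp.prodContinuousLinearEquiv 2 ℝ E F).injective
  simp [pairL2, J2]

lemma gradient_fst (g : WithLp 2 (E × F) → ℝ) (hg : Differentiable ℝ g) (w : E) (x : F) :
    gradient (fun w' => g (pairL2 w' x)) w = (gradient g (pairL2 w x)).fst := by
  have h1 : HasFDerivAt (fun w' : E => pairL2 w' x) (J1 : E →L[ℝ] WithLp 2 (E × F)) w := by
    have := (J1 (E := E) (F := F)).hasFDerivAt (x := w) |>.add_const (pairL2 0 x)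
    simpa [← pairL2_eq_J1] using this
  have hfd : HasFDerivAt (fun w' => g (pairL2 w' x))
      ((fderiv ℝ g (pairL2 w x)).comp (J1 : E →L[ℝ] WithLp 2 (E × F))) w :=
    ((hg _).hasFDerivAt).comp w h1
  apply ext_inner_right ℝ
  intro u
  rw [← fderiv_eq_inner_gradient, hfd.fderiv]
  have h0 : (fderiv ℝ g (pairL2 w x)).comp (J1 : E →L[ℝ] WithLp 2 (E × F)) u
      = fderiv ℝ g (pairL2 w x) (J1 u) := rfl
  rw [h0, fderiv_eq_inner_gradient, WithLp.prod_inner_apply]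
  have h2 : (J1 u : WithLp 2 (E × F)).fst = u := rfl
  have h3 : (J1 u : WithLp 2 (E × F)).snd = (0 : F) := rfl
  rw [show (J1 u : WithLp 2 (E × F)).ofLp.1 = u from h2,
    show (J1 u : WithLp 2 (E × F)).ofLp.2 = (0 : F) from h3, inner_zero_right, add_zero]
  rfl

lemma gradient_snd (g : WithLp 2 (E × F) → ℝ) (hg : Differentiable ℝ g) (w : E) (x : F) :
    gradient (fun y => g (pairL2 w y)) x = (gradient g (pairL2 w x)).snd := by
  have h1 : HasFDerivAt (fun y : F => pairL2 w y) (J2 : F →L[ℝ] WithLp 2 (E × F)) x := by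
    have := (J2 (E := E) (F := F)).hasFDerivAt (x := x) |>.add_const (pairL2 w 0)
    simpa [← pairL2_eq_J2] using this
  have hfd : HasFDerivAt (fun y => g (pairL2 w y))
      ((fderiv ℝ g (pairL2 w x)).comp (J2 : F →L[ℝ] WithLp 2 (E × F))) x :=
    ((hg _).hasFDerivAt).comp x h1
  apply ext_inner_right ℝ
  intro u
  rw [← fderiv_eq_inner_gradient, hfd.fderiv]
  have h0 : (fderiv ℝ g (pairL2 w x)).comp (J2 : F →L[ℝ] WithLp 2 (E × F)) u
      = fderiv ℝ g (pairL2 w x) (J2 u) := rfl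
  rw [h0, fderiv_eq_inner_gradient, WithLp.prod_inner_apply]
  have h2 : (J2 u : WithLp 2 (E × F)).fst = (0 : E) := rfl
  have h3 : (J2 u : WithLp 2 (E × F)).snd = u := rfl
  rw [show (J2 u : WithLp 2 (E × F)).ofLp.1 = (0 : E) from h2,
    show (J2 u : WithLp 2 (E × F)).ofLp.2 = u from h3, inner_zero_right, zero_add]
  rfl

end Partial

/-- For gradient descent on the penalized objective `Φ = f + λ g`
(lower bounded, `L_Φ`-Lipschitz gradient, step `0 < α ≤ 1/L_Φ`), if for each `t` the
point `x_t^*` globally minimizes `g(Wᵗ, ·)` and `‖∇_W g(Wᵗ, x_t^*)‖² ≤ ε̄`, then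
`(1/T) Σ_{t<T} ‖∇f(θᵗ) + λ(∇g(θᵗ) − ∇g(Wᵗ, x_t^*))‖² ≤ 4(Φ(θ⁰) − Φ*)/(αT) + 2λ²ε̄`. -/
theorem penalized_bilevel_gd_bound (p d : ℕ)
    (f g : WithLp 2 (EuclideanSpace ℝ (Fin p) × EuclideanSpace ℝ (Fin d)) → ℝ)
    (hf : Differentiable ℝ f) (hg : Differentiable ℝ g)
    (lam : ℝ) (hlam : 0 < lam)
    (Φ : WithLp 2 (EuclideanSpace ℝ (Fin p) × EuclideanSpace ℝ (Fin d)) → ℝ)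
    (hΦdef : ∀ θ, Φ θ = f θ + lam * g θ)
    (LΦ : ℝ) (hLΦ : 0 < LΦ)
    (hLip : ∀ θ θ', ‖gradient Φ θ - gradient Φ θ'‖ ≤ LΦ * ‖θ - θ'‖)
    (Φstar : ℝ) (hbdd : ∀ θ, Φstar ≤ Φ θ)
    (α : ℝ) (hα0 : 0 < α) (hα1 : α ≤ 1 / LΦ)
    (W : ℕ → EuclideanSpace ℝ (Fin p)) (X : ℕ → EuclideanSpace ℝ (Fin d))
    (hupd : ∀ t, pairL2 (W (t + 1)) (X (t + 1)) =
        pairL2 (W t) (X t) - α • gradient Φ (pairL2 (W t) (X t)))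
    (xstar : ℕ → EuclideanSpace ℝ (Fin d))
    (hxstar : ∀ t y, g (pairL2 (W t) (xstar t)) ≤ g (pairL2 (W t) y))
    (εb : ℝ) (hεb : 0 ≤ εb)
    (hWgrad : ∀ t, ‖gradient (fun W' => g (pairL2 W' (xstar t))) (W t)‖ ^ 2 ≤ εb)
    (T : ℕ) (hT : 1 ≤ T) :
    (1 / (T : ℝ)) * ∑ t ∈ Finset.range T,
        ‖gradient f (pairL2 (W t) (X t)) +
          lam • (gradient g (pairL2 (W t) (X t)) - gradient g (pairL2 (W t) (xstar t)))‖ ^ 2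
      ≤ 4 * (Φ (pairL2 (W 0) (X 0)) - Φstar) / (α * T) + 2 * lam ^ 2 * εb := by
  set θ : ℕ → WithLp 2 (EuclideanSpace ℝ (Fin p) × EuclideanSpace ℝ (Fin d)) :=
    fun t => pairL2 (W t) (X t) with hθ
  have hΦfun : Φ = fun θ => f θ + lam * g θ := funext hΦdef
  have hΦdiff : Differentiable ℝ Φ := by
    rw [hΦfun]; exact hf.add (hg.const_mul lam)
  have hgradΦ : ∀ θ', gradient Φ θ' = gradient f θ' + lam • gradient g θ' := by
    intro θ'
    rw [hΦfun]
    exact gradient_add_smul f g hf hg lam θ'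
  -- bound on the full gradient of g at (W t, xstar t)
  have hGg : ∀ t, ‖gradient g (pairL2 (W t) (xstar t))‖ ^ 2 ≤ εb := by
    intro t
    have hsnd : (gradient g (pairL2 (W t) (xstar t))).snd = 0 := by
      rw [← gradient_snd g hg (W t) (xstar t)]
      have hmin : IsLocalMin (fun y => g (pairL2 (W t) y)) (xstar t) :=
        Filter.Eventually.of_forall (fun y => hxstar t y)
      show (InnerProductSpace.toDual ℝ _).symm
        (fderiv ℝ (fun y => g (pairL2 (W t) y)) (xstar t)) = 0
      rw [hmin.fderiv_eq_zero, map_zero]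
    have hfst := hWgrad t
    rw [gradient_fst g hg (W t) (xstar t)] at hfst
    rw [WithLp.prod_norm_sq_eq_of_L2, hsnd]
    simpa using hfst
  -- per-step sufficient decrease
  have hstep : ∀ t, Φ (θ (t + 1)) ≤ Φ (θ t) - α / 2 * ‖gradient Φ (θ t)‖ ^ 2 := by
    intro t
    have hdesc := descent_lemma Φ hΦdiff LΦ hLΦ.le hLip (θ t) (θ (t + 1))
    have hdiff : θ (t + 1) - θ t = -(α • gradient Φ (θ t)) := by
      rw [hθ]; simp only [hupd t]; abel
    rw [hdiff] at hdesc
    have hin : ⟪gradient Φ (θ t), -(α • gradient Φ (θ t))⟫ = -(α * ‖gradient Φ (θ t)‖ ^ 2) := by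
      rw [inner_neg_right, real_inner_smul_right, real_inner_self_eq_norm_sq]
    have hnorm : ‖-(α • gradient Φ (θ t))‖ ^ 2 = α ^ 2 * ‖gradient Φ (θ t)‖ ^ 2 := by
      rw [norm_neg, norm_smul, Real.norm_eq_abs, abs_of_pos hα0, mul_pow]
    rw [hin, hnorm] at hdesc
    have hαL : α * LΦ ≤ 1 := by
      rw [le_div_iff₀ hLΦ] at hα1; linarith
    nlinarith [sq_nonneg ‖gradient Φ (θ t)‖, hα0]
  -- telescoping sum
  have hsum : ∀ S : ℕ, ∑ t ∈ Finset.range S, α / 2 * ‖gradient Φ (θ t)‖ ^ 2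
      ≤ Φ (θ 0) - Φ (θ S) := by
    intro S
    induction S with
    | zero => simp
    | succ n ih =>
      rw [Finset.sum_range_succ]
      have := hstep n
      linarith
  have hS2 : ∑ t ∈ Finset.range T, ‖gradient Φ (θ t)‖ ^ 2
      ≤ 2 / α * (Φ (θ 0) - Φstar) := by
    have h1 := hsum T
    have h2 := hbdd (θ T)
    have h3 : α / 2 * ∑ t ∈ Finset.range T, ‖gradient Φ (θ t)‖ ^ 2
        ≤ Φ (θ 0) - Φstar := by
      rw [Finset.mul_sum]; linarith
    rw [div_mul_eq_mul_div, le_div_iff₀ hα0]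
    nlinarith
  -- pointwise bound on the objective gradient mapping
  have hpt : ∀ t, ‖gradient f (θ t) +
      lam • (gradient g (θ t) - gradient g (pairL2 (W t) (xstar t)))‖ ^ 2
      ≤ 2 * ‖gradient Φ (θ t)‖ ^ 2 + 2 * lam ^ 2 * εb := by
    intro t
    have hv : gradient f (θ t) +
        lam • (gradient g (θ t) - gradient g (pairL2 (W t) (xstar t)))
        = gradient Φ (θ t) - lam • gradient g (pairL2 (W t) (xstar t)) := by
      rw [hgradΦ (θ t), smul_sub]; abel
    rw [hv]
    have h1 : ‖gradient Φ (θ t) - lam • gradient g (pairL2 (W t) (xstar t))‖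
        ≤ ‖gradient Φ (θ t)‖ + ‖lam • gradient g (pairL2 (W t) (xstar t))‖ := norm_sub_le _ _
    have h1' : ‖gradient Φ (θ t) - lam • gradient g (pairL2 (W t) (xstar t))‖ ^ 2
        ≤ (‖gradient Φ (θ t)‖ + ‖lam • gradient g (pairL2 (W t) (xstar t))‖) ^ 2 :=
      pow_le_pow_left₀ (norm_nonneg _) h1 2
    have h2 : ‖lam • gradient g (pairL2 (W t) (xstar t))‖ ^ 2
        = lam ^ 2 * ‖gradient g (pairL2 (W t) (xstar t))‖ ^ 2 := by
      rw [norm_smul, Real.norm_eq_abs, mul_pow, sq_abs]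
    have h3 := hGg t
    have h4 : lam ^ 2 * ‖gradient g (pairL2 (W t) (xstar t))‖ ^ 2 ≤ lam ^ 2 * εb :=
      mul_le_mul_of_nonneg_left h3 (sq_nonneg lam)
    nlinarith [sq_nonneg (‖gradient Φ (θ t)‖ -
      ‖lam • gradient g (pairL2 (W t) (xstar t))‖)]
  have hTpos : (0 : ℝ) < T := by exact_mod_cast hT
  have hsum2 : ∑ t ∈ Finset.range T,
      ‖gradient f (θ t) +
        lam • (gradient g (θ t) - gradient g (pairL2 (W t) (xstar t)))‖ ^ 2
      ≤ 2 * (2 / α * (Φ (θ 0) - Φstar)) + T * (2 * lam ^ 2 * εb) := by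
    calc ∑ t ∈ Finset.range T, ‖gradient f (θ t) +
          lam • (gradient g (θ t) - gradient g (pairL2 (W t) (xstar t)))‖ ^ 2
        ≤ ∑ t ∈ Finset.range T, (2 * ‖gradient Φ (θ t)‖ ^ 2 + 2 * lam ^ 2 * εb) :=
          Finset.sum_le_sum fun t _ => hpt t
      _ = 2 * (∑ t ∈ Finset.range T, ‖gradient Φ (θ t)‖ ^ 2) + T * (2 * lam ^ 2 * εb) := by
          rw [Finset.sum_add_distrib, ← Finset.mul_sum, Finset.sum_const, Finset.card_range,
            nsmul_eq_mul]
      _ ≤ 2 * (2 / α * (Φ (θ 0) - Φstar)) + T * (2 * lam ^ 2 * εb) := by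
          linarith [hS2]
  calc (1 / (T : ℝ)) * ∑ t ∈ Finset.range T,
        ‖gradient f (θ t) +
          lam • (gradient g (θ t) - gradient g (pairL2 (W t) (xstar t)))‖ ^ 2
      ≤ (1 / (T : ℝ)) * (2 * (2 / α * (Φ (θ 0) - Φstar)) + T * (2 * lam ^ 2 * εb)) := by
        apply mul_le_mul_of_nonneg_left hsum2 (by positivity)
    _ = 4 * (Φ (θ 0) - Φstar) / (α * T) + 2 * lam ^ 2 * εb := by
        field_simp
        ring
end

section
/- Let f, g : ℝ^p × ℝ^d → ℝ, suppose for every W the minimum min_{x'} g(W, x') is attained, and define the penalty p(W, x) := g(W, x) − min_{x'} g(W, x') ≥ 0. Fix λ > 0 and suppose (W̄, x̄) is a global minimizer of (W, x) ↦ f(W, x) + λ·p(W, x). Then (W̄, x̄) is a global solution of the relaxed constrained problem with tolerance ε̄ := p(W̄, x̄): that is, for every (W, x) with p(W, x) ≤ ε̄, one has f(W̄, x̄) ≤ f(W, x). -/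
/-- If `(W̄, x̄)` globally minimizes the penalized objective
`f + λ p` with `p(W,x) = g(W,x) − min_{x'} g(W,x')`, then `(W̄, x̄)` is a global
solution of the relaxed constrained problem with tolerance `ε̄ = p(W̄, x̄)`:
every `(W,x)` with `p(W,x) ≤ ε̄` satisfies `f(W̄,x̄) ≤ f(W,x)`. -/
theorem penalized_minimizer_solves_relaxed (pdim d : ℕ)
    (f g : EuclideanSpace ℝ (Fin pdim) → EuclideanSpace ℝ (Fin d) → ℝ)
    (hattain : ∀ W, ∃ xm, ∀ x', g W xm ≤ g W x')
    (p : EuclideanSpace ℝ (Fin pdim) → EuclideanSpace ℝ (Fin d) → ℝ)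
    (hpdef : ∀ W x, p W x = g W x - sInf (Set.range (g W)))
    (lam : ℝ) (hlam : 0 < lam)
    (Wbar : EuclideanSpace ℝ (Fin pdim)) (xbar : EuclideanSpace ℝ (Fin d))
    (hglob : ∀ W x, f Wbar xbar + lam * p Wbar xbar ≤ f W x + lam * p W x) :
    ∀ W x, p W x ≤ p Wbar xbar → f Wbar xbar ≤ f W x := by
  intro W x hle
  have h := hglob W x
  nlinarith [mul_le_mul_of_nonneg_left hle hlam.le]
end
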